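/- Let (A, B, ◁, ▷) be a matched pair of Jordan algebras over a field k of characteristic ≠ 2 with bicrossed product E = A ⋈ B, and let r : B → A be a deformation map of this matched pair. Then B̃ := {(r(x), x) : x ∈ B} is a Jordan subalgebra of E which is a complement of A × {0} in E: E = (A × {0}) + B̃ and (A × {0}) ∩ B̃ = {0}. -/

import Mathlib

/-- A bilinear multiplication `m` on `A` makes `A` a Jordan algebra:
it is commutative and satisfies the Jordan identity `(a² b) a = a² (b a)`. -/
def IsJordanAlg {k A : Type*} [Field k] [AddCommGroup A] [Module k A]
    (m : A →ₗ[k] A →ₗ[k] A) : Prop :=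
  (∀ a b, m a b = m b a) ∧ ∀ a b, m (m (m a a) b) a = m (m a a) (m b a)

/-- A (possibly set-relativized) bilinear-to-function version of the matched pair
conditions for Jordan algebras: `l = ◁ : V × A → V` is a right action,
`p = ▷ : V × A → A` is a left action, and the compatibilities (MP1)-(MP6) hold,
for all elements of `SA ⊆ A`, `SV ⊆ V`. -/
def MPConds (k : Type*) {A V : Type*} [Field k] [AddCommGroup A] [Module k A]
    [AddCommGroup V] [Module k V]
    (mA : A → A → A) (mV : V → V → V)
    (l : V → A → V) (p : V → A → A) (SA : Set A) (SV : Set V) : Prop :=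
  -- ◁ is a right action of A on V : (x ◁ a²) ◁ a = (x ◁ a) ◁ a²
  (∀ x ∈ SV, ∀ a ∈ SA, l (l x (mA a a)) a = l (l x a) (mA a a)) ∧
  -- ▷ is a left action of V on A : x ▷ (x² ▷ a) = x² ▷ (x ▷ a)
  (∀ x ∈ SV, ∀ a ∈ SA, p x (p (mV x x) a) = p (mV x x) (p x a)) ∧
  -- (MP1)
  (∀ a ∈ SA, ∀ x ∈ SV,
      mA a (p x (mA a a)) + p (l x (mA a a)) a
        = mA (mA a a) (p x a) + p (l x a) (mA a a)) ∧
  -- (MP2)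
  (∀ a ∈ SA, ∀ x ∈ SV,
      l x (p (mV x x) a) + mV (l (mV x x) a) x
        = l (mV x x) (p x a) + mV (mV x x) (l x a)) ∧
  -- (MP3)
  (∀ a ∈ SA, ∀ b ∈ SA, ∀ x ∈ SV,
      (2 : k) • (l (l (l x a) b) a + l x (mA (p x a) b) + l x (p (l x a) b)
          + mV (l (l x a) b) x)
        + l (l (mV x x) b) a + l x (mA b (mA a a))
      = (2 : k) • (l (l x a) (mA b a) + l (l x a) (p x b) + l (l x b) (p x a)
          + mV (l x a) (l x b))
        + l (mV x x) (mA b a) + l (l x b) (mA a a)) ∧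
  -- (MP4)
  (∀ a ∈ SA, ∀ x ∈ SV, ∀ y ∈ SV,
      (2 : k) • (p y (p x a) + p x (p y (p x a)) + p (l y (p x a)) a
          + p (mV (l x a) y) a)
        + p (mV (mV x x) y) a + p x (p y (mA a a))
      = (2 : k) • (mA (p y a) (p x a) + p (mV x y) (p x a) + p (l y a) (p x a)
          + p (l x a) (p y a))
        + p (mV x x) (p y a) + p (mV x y) (mA a a)) ∧
  -- (MP5)
  (∀ a ∈ SA, ∀ x ∈ SV, ∀ y ∈ SV,
      (2 : k) • (l (l y (p x a)) a + l (mV (l x a) y) a + l x (p y (p x a))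
          + mV (l y (p x a)) x + mV (mV (l x a) y) x)
        + l (mV (mV x x) y) a + l x (p y (mA a a)) + mV (l y (mA a a)) x
      = (2 : k) • (l (l x a) (p y a) + l (l y a) (p x a) + l (mV x y) (p x a)
          + mV (l x a) (mV x y) + mV (l x a) (l y a))
        + l (mV x x) (p y a) + l (mV x y) (mA a a) + mV (mV x x) (l y a)) ∧
  -- (MP6)
  (∀ a ∈ SA, ∀ b ∈ SA, ∀ x ∈ SV,
      (2 : k) • (mA (mA (p x a) b) a + mA (p (l x a) b) a + p (l (l x a) b) a
          + p x (mA (p x a) b) + p x (p (l x a) b))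
        + mA (p (mV x x) b) a + p (l (mV x x) b) a + p x (mA (mA a a) b)
      = (2 : k) • (mA (p x a) (mA a b) + p (l x a) (mA b a) + mA (p x a) (p x b)
          + p (l x b) (p x a) + p (l x a) (p x b))
        + p (mV x x) (mA b a) + p (l x b) (mA a a) + mA (mA a a) (p x b))

/-- `(A, V, ◁, ▷)` is a matched pair of Jordan algebras (bundled bilinear maps). -/
def IsMPair {k A V : Type*} [Field k] [AddCommGroup A] [Module k A]
    [AddCommGroup V] [Module k V]
    (mA : A →ₗ[k] A →ₗ[k] A) (mV : V →ₗ[k] V →ₗ[k] V)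
    (l : V →ₗ[k] A →ₗ[k] V) (p : V →ₗ[k] A →ₗ[k] A) : Prop :=
  MPConds k (fun a b => mA a b) (fun x y => mV x y) (fun x a => l x a) (fun x a => p x a)
    Set.univ Set.univ

/-- The bicrossed product multiplication on `A × V`:
`(a, x) ∘ (b, y) = (ab + x▷b + y▷a, x◁b + y◁a + xy)`. -/
def bimulJ {k A V : Type*} [Field k] [AddCommGroup A] [Module k A]
    [AddCommGroup V] [Module k V]
    (mA : A →ₗ[k] A →ₗ[k] A) (mV : V →ₗ[k] V →ₗ[k] V)
    (l : V →ₗ[k] A →ₗ[k] V) (p : V →ₗ[k] A →ₗ[k] A) :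
    A × V → A × V → A × V :=
  fun z w =>
    (mA z.1 w.1 + p z.2 w.1 + p w.2 z.1, l z.2 w.1 + l w.2 z.1 + mV z.2 w.2)

/-- The left semidirect product multiplication on `A × V`:
`(a, x) ∘ (b, y) = (ab + x▷b + y▷a, xy)`. -/
def lsemimulJ {k A V : Type*} [Field k] [AddCommGroup A] [Module k A]
    [AddCommGroup V] [Module k V]
    (mA : A →ₗ[k] A →ₗ[k] A) (mV : V →ₗ[k] V →ₗ[k] V)
    (p : V →ₗ[k] A →ₗ[k] A) : A × V → A × V → A × V :=
  fun z w => (mA z.1 w.1 + p z.2 w.1 + p w.2 z.1, mV z.2 w.2)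

/-- The right semidirect product multiplication on `A × V`:
`(a, x) ∘ (b, y) = (ab, x◁b + y◁a + xy)`. -/
def rsemimulJ {k A V : Type*} [Field k] [AddCommGroup A] [Module k A]
    [AddCommGroup V] [Module k V]
    (mA : A →ₗ[k] A →ₗ[k] A) (mV : V →ₗ[k] V →ₗ[k] V)
    (l : V →ₗ[k] A →ₗ[k] V) : A × V → A × V → A × V :=
  fun z w => (mA z.1 w.1, l z.2 w.1 + l w.2 z.1 + mV z.2 w.2)

/-- `m : A × A → A` is a Jordan algebra multiplication: it is bilinear,
commutative and satisfies the Jordan identity. -/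
def IsJordanMulFun (k : Type*) {A : Type*} [Field k] [AddCommGroup A] [Module k A]
    (m : A → A → A) : Prop :=
  (∀ z z' w, m (z + z') w = m z w + m z' w) ∧
  (∀ (c : k) (z w), m (c • z) w = c • m z w) ∧
  (∀ z w w', m z (w + w') = m z w + m z w') ∧
  (∀ (c : k) (z w), m z (c • w) = c • m z w) ∧
  (∀ z w, m z w = m w z) ∧
  (∀ z w, m (m (m z z) w) z = m (m z z) (m w z))

/-- `r : B → A` is a deformation map of the matched pair `(A, B, ◁, ▷)`:
`r(xy) − r(x)r(y) = x▷r(y) + y▷r(x) − r(x◁r(y) + y◁r(x))`. -/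
def IsDefMapB {k A B : Type*} [Field k] [AddCommGroup A] [Module k A]
    [AddCommGroup B] [Module k B]
    (mA : A →ₗ[k] A →ₗ[k] A) (mB : B →ₗ[k] B →ₗ[k] B)
    (l : B →ₗ[k] A →ₗ[k] B) (p : B →ₗ[k] A →ₗ[k] A) (r : B →ₗ[k] A) : Prop :=
  ∀ x y, r (mB x y) - mA (r x) (r y)
    = p x (r y) + p y (r x) - r (l x (r y) + l y (r x))

/-- Equivalence of deformation maps: `r ∼ s` iff there is a `k`-linear
automorphism `σ` of `B` with
`σ(xy) − σ(x)σ(y) = σ(x)◁s(σ(y)) − σ(x◁r(y)) + σ(y)◁s(σ(x)) − σ(y◁r(x))`. -/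
def DefEquivJ {k A B : Type*} [Field k] [AddCommGroup A] [Module k A]
    [AddCommGroup B] [Module k B]
    (mB : B →ₗ[k] B →ₗ[k] B) (l : B →ₗ[k] A →ₗ[k] B) (r s : B →ₗ[k] A) : Prop :=
  ∃ σ : B →ₗ[k] B, Function.Bijective σ ∧ ∀ x y,
    σ (mB x y) - mB (σ x) (σ y)
      = l (σ x) (s (σ y)) - σ (l x (r y)) + l (σ y) (s (σ x)) - σ (l y (r x))

/-- if `r : B → A` is a deformation map of a matched pair
`(A, B, ◁, ▷)`, then `B̃ = {(r x, x) : x ∈ B}` is a Jordan subalgebra of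
`E = A ⋈ B` and a complement of `A × {0}` in `E`. -/
theorem statement11 {k A B : Type*} [Field k] [AddCommGroup A] [Module k A]
    [AddCommGroup B] [Module k B] (hchar : (2 : k) ≠ 0)
    (mA : A →ₗ[k] A →ₗ[k] A) (mB : B →ₗ[k] B →ₗ[k] B)
    (l : B →ₗ[k] A →ₗ[k] B) (p : B →ₗ[k] A →ₗ[k] A)
    (hA : IsJordanAlg mA) (hB : IsJordanAlg mB)
    (hmp : IsMPair mA mB l p)
    (r : B →ₗ[k] A) (hr : IsDefMapB mA mB l p r) :
    -- B̃ is a linear subspace of A ⋈ B ...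
    (∀ x y : B, ((r x, x) : A × B) + (r y, y) = (r (x + y), x + y)) ∧
    (∀ (c : k) (x : B), c • ((r x, x) : A × B) = (r (c • x), c • x)) ∧
    -- ... closed under the bicrossed product multiplication
    (∀ x y : B, ∃ z : B, bimulJ mA mB l p (r x, x) (r y, y) = (r z, z)) ∧
    -- E = (A × {0}) + B̃
    (∀ e : A × B, ∃ (a : A) (x : B), e = ((a, (0 : B)) : A × B) + (r x, x)) ∧
    -- (A × {0}) ∩ B̃ = {0}
    (∀ z : A × B, z ∈ Set.range (fun x : B => ((r x, x) : A × B)) →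
      z.2 = 0 → z = 0) := by
  refine ⟨fun x y => by simp, fun c x => by simp, ?_, ?_, ?_⟩
  · intro x y
    refine ⟨l x (r y) + l y (r x) + mB x y, ?_⟩
    have h := hr x y
    simp only [bimulJ, map_add, Prod.mk.injEq]
    constructor
    · have : r (mB x y) = mA (r x) (r y) + (p x (r y) + p y (r x) - r (l x (r y) + l y (r x))) := by
        rw [← h]; abel
      rw [map_add] at this
      rw [this]; abel
    · trivial
  · intro e
    exact ⟨e.1 - r e.2, e.2, by simp⟩
  · rintro z ⟨x, rfl⟩ h
    simp only at h
    simp [h]
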